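/- Let F : ℕ → ℝ^D admit a limiting natural distribution μ. If μ({x : x_d = α_d}) = 0 for each 1 ≤ d ≤ D, then the natural density of {k ∈ ℕ : F(k)_1 > α_1, …, F(k)_D > α_D} exists and equals μ({x ∈ ℝ^D : x_1 > α_1, …, x_D > α_D}). -/
import Mathlib

open MeasureTheory Filter Topology

noncomputable def clamp01 (s : ℝ) : ℝ := max 0 (min 1 s)

lemma clamp01_nonneg (s : ℝ) : 0 ≤ clamp01 s := le_max_left _ _

lemma clamp01_le_one (s : ℝ) : clamp01 s ≤ 1 :=
  max_le zero_le_one (min_le_left _ _)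

lemma clamp01_eq_one {s : ℝ} (hs : 1 ≤ s) : clamp01 s = 1 := by
  unfold clamp01
  rw [min_eq_left hs, max_eq_right zero_le_one]

lemma clamp01_eq_zero {s : ℝ} (hs : s ≤ 0) : clamp01 s = 0 := by
  unfold clamp01
  rw [max_eq_left ((min_le_right _ _).trans hs)]

lemma clamp01_lip (a b : ℝ) : |clamp01 a - clamp01 b| ≤ |a - b| := by
  unfold clamp01
  calc |max 0 (min 1 a) - max 0 (min 1 b)| ≤ max |(0:ℝ) - 0| |min 1 a - min 1 b| :=
        abs_max_sub_max_le_max _ _ _ _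
    _ ≤ max |(0:ℝ) - 0| (max |(1:ℝ) - 1| |a - b|) :=
        max_le_max le_rfl (abs_min_sub_min_le_max _ _ _ _)
    _ ≤ |a - b| := by simp

lemma coord_dist_le {D : ℕ} (d : Fin D) (x y : EuclideanSpace ℝ (Fin D)) :
    dist (x d) (y d) ≤ dist x y := by
  rw [EuclideanSpace.dist_eq]
  have h1 : dist (x d) (y d) = Real.sqrt (dist (x d) (y d) ^ 2) :=
    (Real.sqrt_sq dist_nonneg).symm
  rw [h1]
  exact Real.sqrt_le_sqrt (Finset.single_le_sum (f := fun i => dist (x i) (y i) ^ 2)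
    (fun i _ => sq_nonneg _) (Finset.mem_univ d))

lemma abs_inf'_sub_inf'_le {ι : Type*} {s : Finset ι} (H : s.Nonempty) (f g : ι → ℝ) {c : ℝ}
    (hfg : ∀ i ∈ s, |f i - g i| ≤ c) :
    |s.inf' H f - s.inf' H g| ≤ c := by
  rw [abs_sub_le_iff]
  constructor
  · obtain ⟨i, hi, hig⟩ := Finset.exists_mem_eq_inf' H g
    calc s.inf' H f - s.inf' H g ≤ f i - g i := by
          rw [hig]; exact sub_le_sub_right (Finset.inf'_le _ hi) _
      _ ≤ |f i - g i| := le_abs_self _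
      _ ≤ c := hfg i hi
  · obtain ⟨i, hi, hif⟩ := Finset.exists_mem_eq_inf' H f
    calc s.inf' H g - s.inf' H f ≤ g i - f i := by
          rw [hif]; exact sub_le_sub_right (Finset.inf'_le _ hi) _
      _ ≤ |f i - g i| := by rw [abs_sub_comm]; exact le_abs_self _
      _ ≤ c := hfg i hi

theorem stmt_2 {D : ℕ} (hD : 1 ≤ D)
    (F : ℕ → EuclideanSpace ℝ (Fin D))
    (μ : Measure (EuclideanSpace ℝ (Fin D))) [IsProbabilityMeasure μ]
    (hlim : ∀ g : EuclideanSpace ℝ (Fin D) → ℝ, (∃ L : NNReal, LipschitzWith L g) →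
      (∃ M : ℝ, ∀ x, |g x| ≤ M) →
      Tendsto (fun X : ℕ => (1 / (X : ℝ)) * ∑ k ∈ Finset.range X, g (F k))
        atTop (𝓝 (∫ x, g x ∂μ)))
    (α : EuclideanSpace ℝ (Fin D))
    (h : ∀ d : Fin D, μ {x | x d = α d} = 0) :
    Tendsto (fun X : ℕ => (1 / (X : ℝ)) *
        ∑ k ∈ Finset.range X,
          Set.indicator {k : ℕ | ∀ d : Fin D, α d < F k d} (fun _ => (1 : ℝ)) k)
      atTop (𝓝 ((μ {x | ∀ d : Fin D, α d < x d}).toReal)) := by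
  have hne : Nonempty (Fin D) := Fin.pos_iff_nonempty.mp hD
  have H : (Finset.univ : Finset (Fin D)).Nonempty := Finset.univ_nonempty
  set S : Set (EuclideanSpace ℝ (Fin D)) := {x | ∀ d : Fin D, α d < x d} with hS_def
  set T : Set (EuclideanSpace ℝ (Fin D)) := {x | ∀ d : Fin D, α d ≤ x d} with hT_def
  set a : ℕ → ℝ := fun X : ℕ => (1 / (X : ℝ)) *
      ∑ k ∈ Finset.range X,
        Set.indicator {k : ℕ | ∀ d : Fin D, α d < F k d} (fun _ => (1 : ℝ)) k with ha_def
  -- coordinate continuity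
  have hcoord : ∀ d : Fin D, Continuous (fun x : EuclideanSpace ℝ (Fin D) => x d) := by
    intro d
    exact LipschitzWith.continuous (K := 1) (LipschitzWith.of_dist_le_mul (fun x y => by
      rw [NNReal.coe_one, one_mul]; exact coord_dist_le d x y))
  have hS_meas : MeasurableSet S := by
    have hEq : S = ⋂ d : Fin D, (fun x : EuclideanSpace ℝ (Fin D) => x d) ⁻¹' Set.Ioi (α d) := by
      ext x; simp [hS_def, Set.mem_iInter]
    rw [hEq]
    exact (isOpen_iInter_of_finite fun d => (isOpen_Ioi).preimage (hcoord d)).measurableSet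
  have hT_meas : MeasurableSet T := by
    have hEq : T = ⋂ d : Fin D, (fun x : EuclideanSpace ℝ (Fin D) => x d) ⁻¹' Set.Ici (α d) := by
      ext x; simp [hT_def, Set.mem_iInter]
    rw [hEq]
    exact (isClosed_iInter fun d => (isClosed_Ici).preimage (hcoord d)).measurableSet
  -- μ T = μ S
  have hTS : μ T = μ S := by
    refine le_antisymm ?_ (measure_mono fun x hx d => (hx d).le)
    have hsub : T ⊆ S ∪ ⋃ d : Fin D, {x | x d = α d} := by
      intro x hx
      by_cases hxs : x ∈ S
      · exact Or.inl hxs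
      · right
        simp only [hS_def, Set.mem_setOf_eq, not_forall, not_lt] at hxs
        obtain ⟨d, hd⟩ := hxs
        exact Set.mem_iUnion.mpr ⟨d, le_antisymm hd (hx d)⟩
    calc μ T ≤ μ (S ∪ ⋃ d : Fin D, {x | x d = α d}) := measure_mono hsub
      _ ≤ μ S + μ (⋃ d : Fin D, {x | x d = α d}) := measure_union_le _ _
      _ = μ S := by rw [measure_iUnion_null fun d => h d, add_zero]
  -- test functions
  set g : ℕ → EuclideanSpace ℝ (Fin D) → ℝ := fun n x =>
    Finset.univ.inf' H fun d => clamp01 ((x d - α d) * ((n : ℝ) + 1)) with hg_def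
  set gu : ℕ → EuclideanSpace ℝ (Fin D) → ℝ := fun n x =>
    Finset.univ.inf' H fun d => clamp01 ((x d - α d) * ((n : ℝ) + 1) + 1) with hgu_def
  have hg_nonneg : ∀ n x, 0 ≤ g n x := fun n x =>
    Finset.le_inf' H _ fun d _ => clamp01_nonneg _
  have hg_le_one : ∀ n x, g n x ≤ 1 :=
    fun n x => (Finset.inf'_le _ (Finset.mem_univ (Classical.arbitrary (Fin D)))).trans
      (clamp01_le_one _)
  have hgu_nonneg : ∀ n x, 0 ≤ gu n x := fun n x =>
    Finset.le_inf' H _ fun d _ => clamp01_nonneg _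
  have hgu_le_one : ∀ n x, gu n x ≤ 1 :=
    fun n x => (Finset.inf'_le _ (Finset.mem_univ (Classical.arbitrary (Fin D)))).trans
      (clamp01_le_one _)
  have hnpos : ∀ n : ℕ, (0 : ℝ) < (n : ℝ) + 1 := fun n => by positivity
  -- Lipschitz
  have hlip : ∀ (n : ℕ) (c : ℝ), ∃ L : NNReal,
      LipschitzWith L (fun x : EuclideanSpace ℝ (Fin D) =>
        Finset.univ.inf' H fun d => clamp01 ((x d - α d) * ((n : ℝ) + 1) + c)) := by
    intro n c
    refine ⟨⟨(n : ℝ) + 1, (hnpos n).le⟩, LipschitzWith.of_dist_le_mul fun x y => ?_⟩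
    rw [Real.dist_eq]
    refine abs_inf'_sub_inf'_le H _ _ fun d _ => ?_
    refine (clamp01_lip _ _).trans ?_
    have hring : (x d - α d) * ((n : ℝ) + 1) + c - ((y d - α d) * ((n : ℝ) + 1) + c)
        = (x d - y d) * ((n : ℝ) + 1) := by ring
    rw [hring, abs_mul, abs_of_pos (hnpos n), mul_comm]
    exact mul_le_mul_of_nonneg_left (coord_dist_le d x y) (hnpos n).le
  have hlip_g : ∀ n, ∃ L : NNReal, LipschitzWith L (g n) := by
    intro n
    obtain ⟨L, hL⟩ := hlip n 0
    refine ⟨L, ?_⟩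
    have hEq : g n = fun x : EuclideanSpace ℝ (Fin D) =>
        Finset.univ.inf' H fun d => clamp01 ((x d - α d) * ((n : ℝ) + 1) + 0) := by
      funext x; simp [hg_def]
    rw [hEq]; exact hL
  have hlip_gu : ∀ n, ∃ L : NNReal, LipschitzWith L (gu n) := fun n => hlip n 1
  have hcont_g : ∀ n, Continuous (g n) := fun n => (hlip_g n).choose_spec.continuous
  have hcont_gu : ∀ n, Continuous (gu n) := fun n => (hlip_gu n).choose_spec.continuous
  -- pointwise comparisons with the indicator
  have hg_le_ind : ∀ n x, g n x ≤ S.indicator (fun _ => (1 : ℝ)) x := by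
    intro n x
    by_cases hx : x ∈ S
    · rw [Set.indicator_of_mem hx]; exact hg_le_one n x
    · rw [Set.indicator_of_notMem hx]
      simp only [hS_def, Set.mem_setOf_eq, not_forall, not_lt] at hx
      obtain ⟨d, hd⟩ := hx
      refine (Finset.inf'_le _ (Finset.mem_univ d)).trans_eq ?_
      exact clamp01_eq_zero (mul_nonpos_of_nonpos_of_nonneg (by linarith) (hnpos n).le)
  have hind_le_gu : ∀ n x, S.indicator (fun _ => (1 : ℝ)) x ≤ gu n x := by
    intro n x
    by_cases hx : x ∈ S
    · rw [Set.indicator_of_mem hx]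
      refine Finset.le_inf' H _ fun d _ => ?_
      have hx' : α d < x d := hx d
      rw [clamp01_eq_one (by nlinarith [hnpos n])]
    · rw [Set.indicator_of_notMem hx]; exact hgu_nonneg n x
  -- eventual bound helper
  have hδ : ∀ (δ : ℝ), 0 < δ → ∀ᶠ n : ℕ in atTop, 1 ≤ δ * ((n : ℝ) + 1) := by
    intro δ hδ0
    have h1 : Tendsto (fun n : ℕ => ((n : ℝ) + 1)) atTop atTop :=
      tendsto_atTop_add_const_right _ _ tendsto_natCast_atTop_atTop
    exact (h1.const_mul_atTop hδ0).eventually_ge_atTop 1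
  -- pointwise limits
  have hg_tendsto : ∀ x, Tendsto (fun n => g n x) atTop
      (𝓝 (S.indicator (fun _ => (1 : ℝ)) x)) := by
    intro x
    by_cases hx : x ∈ S
    · rw [Set.indicator_of_mem hx]
      have hev : ∀ᶠ n : ℕ in atTop, g n x = 1 := by
        have hall := eventually_all.mpr fun d : Fin D => hδ _ (sub_pos.mpr (hx d))
        filter_upwards [hall] with n hn
        refine le_antisymm (hg_le_one n x) (Finset.le_inf' H _ fun d _ => ?_)
        rw [clamp01_eq_one (hn d)]
      exact tendsto_const_nhds.congr' (hev.mono fun n hn => hn.symm)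
    · rw [Set.indicator_of_notMem hx]
      simp only [hS_def, Set.mem_setOf_eq, not_forall, not_lt] at hx
      obtain ⟨d, hd⟩ := hx
      have hz : ∀ n, g n x = 0 := fun n =>
        le_antisymm ((Finset.inf'_le _ (Finset.mem_univ d)).trans_eq
          (clamp01_eq_zero (mul_nonpos_of_nonpos_of_nonneg (by linarith) (hnpos n).le)))
          (hg_nonneg n x)
      simp only [hz]; exact tendsto_const_nhds
  have hgu_tendsto : ∀ x, Tendsto (fun n => gu n x) atTop
      (𝓝 (T.indicator (fun _ => (1 : ℝ)) x)) := by
    intro x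
    by_cases hx : x ∈ T
    · rw [Set.indicator_of_mem hx]
      have hz : ∀ n, gu n x = 1 := by
        intro n
        refine le_antisymm (hgu_le_one n x) (Finset.le_inf' H _ fun d _ => ?_)
        have hx' : α d ≤ x d := hx d
        rw [clamp01_eq_one (by nlinarith [hnpos n])]
      simp only [hz]; exact tendsto_const_nhds
    · rw [Set.indicator_of_notMem hx]
      simp only [hT_def, Set.mem_setOf_eq, not_forall, not_le] at hx
      obtain ⟨d, hd⟩ := hx
      have hev : ∀ᶠ n : ℕ in atTop, gu n x = 0 := by
        filter_upwards [hδ _ (sub_pos.mpr hd)] with n hn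
        refine le_antisymm ((Finset.inf'_le _ (Finset.mem_univ d)).trans_eq
          (clamp01_eq_zero ?_)) (hgu_nonneg n x)
        nlinarith [hn]
      exact tendsto_const_nhds.congr' (hev.mono fun n hn => hn.symm)
  -- dominated convergence
  have hint : ∀ (gg : ℕ → EuclideanSpace ℝ (Fin D) → ℝ),
      (∀ n, Continuous (gg n)) → (∀ n x, 0 ≤ gg n x) → (∀ n x, gg n x ≤ 1) →
      ∀ (U : Set (EuclideanSpace ℝ (Fin D))), MeasurableSet U →
      (∀ x, Tendsto (fun n => gg n x) atTop (𝓝 (U.indicator (fun _ => (1:ℝ)) x))) →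
      Tendsto (fun n => ∫ x, gg n x ∂μ) atTop (𝓝 ((μ U).toReal)) := by
    intro gg hcont hnn hle U hU hptw
    have hdc := tendsto_integral_of_dominated_convergence (fun _ => (1 : ℝ))
      (fun n => (hcont n).aestronglyMeasurable) (integrable_const (1:ℝ) (μ := μ))
      (fun n => Eventually.of_forall fun x => by
        rw [Real.norm_eq_abs, abs_of_nonneg (hnn n x)]; exact hle n x)
      (Eventually.of_forall hptw)
    rwa [integral_indicator_const (1 : ℝ) hU, smul_eq_mul, mul_one] at hdc
  -- averages converge
  have havg_g : ∀ n, Tendsto (fun X : ℕ => (1 / (X : ℝ)) * ∑ k ∈ Finset.range X, g n (F k))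
      atTop (𝓝 (∫ x, g n x ∂μ)) := fun n =>
    hlim (g n) (hlip_g n) ⟨1, fun x => by
      rw [abs_of_nonneg (hg_nonneg n x)]; exact hg_le_one n x⟩
  have havg_gu : ∀ n, Tendsto (fun X : ℕ => (1 / (X : ℝ)) * ∑ k ∈ Finset.range X, gu n (F k))
      atTop (𝓝 (∫ x, gu n x ∂μ)) := fun n =>
    hlim (gu n) (hlip_gu n) ⟨1, fun x => by
      rw [abs_of_nonneg (hgu_nonneg n x)]; exact hgu_le_one n x⟩
  -- the indicator identity
  have hind : ∀ k : ℕ, Set.indicator {k : ℕ | ∀ d : Fin D, α d < F k d} (fun _ => (1:ℝ)) k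
      = S.indicator (fun _ => (1:ℝ)) (F k) := by
    intro k
    by_cases hk : ∀ d : Fin D, α d < F k d
    · have h1 : k ∈ {k : ℕ | ∀ d : Fin D, α d < F k d} := hk
      have h2 : F k ∈ S := hk
      rw [Set.indicator_of_mem h1, Set.indicator_of_mem h2]
    · have h1 : k ∉ {k : ℕ | ∀ d : Fin D, α d < F k d} := hk
      have h2 : F k ∉ S := hk
      rw [Set.indicator_of_notMem h1, Set.indicator_of_notMem h2]
  -- average comparisons
  have h_ab : ∀ (n X : ℕ), (1 / (X : ℝ)) * ∑ k ∈ Finset.range X, g n (F k) ≤ a X := by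
    intro n X
    refine mul_le_mul_of_nonneg_left (Finset.sum_le_sum fun k _ => ?_) (by positivity)
    rw [hind k]; exact hg_le_ind n (F k)
  have h_ba : ∀ (n X : ℕ), a X ≤ (1 / (X : ℝ)) * ∑ k ∈ Finset.range X, gu n (F k) := by
    intro n X
    refine mul_le_mul_of_nonneg_left (Finset.sum_le_sum fun k _ => ?_) (by positivity)
    rw [hind k]; exact hind_le_gu n (F k)
  -- bounds on a
  have ha_nonneg : ∀ X : ℕ, 0 ≤ a X := fun X =>
    mul_nonneg (by positivity) (Finset.sum_nonneg fun k _ =>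
      Set.indicator_nonneg (s := {k : ℕ | ∀ d : Fin D, α d < F k d}) (fun _ _ => zero_le_one) k)
  have ha_le_one : ∀ X : ℕ, a X ≤ 1 := by
    intro X
    rcases Nat.eq_zero_or_pos X with h0 | h0
    · simp [ha_def, h0]
    · have hsum : ∑ k ∈ Finset.range X,
          Set.indicator {k : ℕ | ∀ d : Fin D, α d < F k d} (fun _ => (1:ℝ)) k ≤ (X : ℝ) := by
        calc ∑ k ∈ Finset.range X,
              Set.indicator {k : ℕ | ∀ d : Fin D, α d < F k d} (fun _ => (1:ℝ)) k
            ≤ ∑ _k ∈ Finset.range X, (1:ℝ) := Finset.sum_le_sum fun k _ =>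
              Set.indicator_apply_le' (fun _ => le_rfl) (fun _ => zero_le_one)
          _ = (X : ℝ) := by simp
      have hX0 : (0:ℝ) < (X:ℝ) := by exact_mod_cast h0
      calc a X ≤ (1 / (X : ℝ)) * (X : ℝ) :=
            mul_le_mul_of_nonneg_left hsum (by positivity)
        _ = 1 := by field_simp
  -- liminf bound
  have hliminf : (μ S).toReal ≤ liminf a atTop := by
    have hGint : Tendsto (fun n => ∫ x, g n x ∂μ) atTop (𝓝 ((μ S).toReal)) :=
      hint g hcont_g hg_nonneg hg_le_one S hS_meas hg_tendsto
    refine le_of_tendsto' hGint fun n => ?_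
    rw [← (havg_g n).liminf_eq]
    exact liminf_le_liminf (Eventually.of_forall (h_ab n))
      (havg_g n).isBoundedUnder_ge (isCoboundedUnder_ge_of_le atTop ha_le_one)
  -- limsup bound
  have hlimsup : limsup a atTop ≤ (μ S).toReal := by
    have hGint : Tendsto (fun n => ∫ x, gu n x ∂μ) atTop (𝓝 ((μ T).toReal)) :=
      hint gu hcont_gu hgu_nonneg hgu_le_one T hT_meas hgu_tendsto
    rw [← hTS]
    refine ge_of_tendsto' hGint fun n => ?_
    rw [← (havg_gu n).limsup_eq]
    exact limsup_le_limsup (Eventually.of_forall (h_ba n))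
      (isCoboundedUnder_le_of_le atTop ha_nonneg) (havg_gu n).isBoundedUnder_le
  exact tendsto_of_le_liminf_of_limsup_le hliminf hlimsup
    (isBoundedUnder_of ⟨1, ha_le_one⟩) (isBoundedUnder_of ⟨0, ha_nonneg⟩)
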